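/- For every ε ∈ (0, π) and ω > 0 there exist constants C, δ > 0, depending only on ε and ω, such that (1 + y) s |d/ds (s E(s, y))| ≤ C √|λ| e^{−δ s y} for all λ ∈ Σ_ε with |λ| ≥ ω, all s > 0 and all y ≥ 0. -/

import Mathlib

open MeasureTheory Real

/-- Principal complex square root `√z = z^(1/2)` (principal branch of `cpow`). -/
noncomputable def csqrt (z : ℂ) : ℂ := z ^ (1/2 : ℂ)

/-- The sector `Σ_ε = {λ ∈ ℂ : λ ≠ 0, |Arg λ| < π − ε}`. -/
def SigmaSector (ε : ℝ) : Set ℂ := {l : ℂ | l ≠ 0 ∧ |l.arg| < Real.pi - ε}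

/-- Mikhlin condition (M) with constant `cbar`, with `K = ⌊(d+1)/2⌋`. -/
def CondM (d : ℕ) (m : EuclideanSpace ℝ (Fin (d-1)) → ℂ) (cbar : ℝ) : Prop :=
  ContDiffOn ℝ ((d+1)/2 : ℕ) m {ξ : EuclideanSpace ℝ (Fin (d-1)) | ξ ≠ 0} ∧
  ∀ k : ℕ, k ≤ (d+1)/2 → ∀ ξ : EuclideanSpace ℝ (Fin (d-1)), ξ ≠ 0 →
    ‖ξ‖ ^ k * ‖iteratedFDerivWithin ℝ k m
        {ξ : EuclideanSpace ℝ (Fin (d-1)) | ξ ≠ 0} ξ‖ ≤ cbar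

/-- Parameterized Mikhlin condition (M*) with constants `(cbar, δ)`, `K = ⌊(d+1)/2⌋`. -/
def CondMStar (d : ℕ) (m : EuclideanSpace ℝ (Fin (d-1)) → ℝ → ℂ) (cbar δ : ℝ) : Prop :=
  (∀ y : ℝ, 0 ≤ y →
    ContDiffOn ℝ ((d+1)/2 : ℕ) (fun ξ => m ξ y)
      {ξ : EuclideanSpace ℝ (Fin (d-1)) | ξ ≠ 0}) ∧
  ∀ k : ℕ, k ≤ (d+1)/2 →
    ∀ ξ : EuclideanSpace ℝ (Fin (d-1)), ξ ≠ 0 → ∀ y : ℝ, 0 ≤ y →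
      ‖ξ‖ ^ k * ‖iteratedFDerivWithin ℝ k (fun ξ => m ξ y)
          {ξ : EuclideanSpace ℝ (Fin (d-1)) | ξ ≠ 0} ξ‖ ≤
        cbar * Real.exp (-δ * ‖ξ‖ * y) / (1 + y)

/-- The fundamental multiplier `m₀(s, y)`. -/
noncomputable def m0 (l : ℂ) (α : ℝ) (s y : ℝ) : ℂ :=
  ((csqrt (l + (s:ℂ)^2) + s) / ((α:ℂ) + l + csqrt (l + (s:ℂ)^2) + s)) *
    ((Complex.exp (-(y:ℂ) * csqrt (l + (s:ℂ)^2)) - Complex.exp (-(y:ℂ) * s)) / l)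

/-- `E(s, y) = e^{-ys} - e^{-y√(λ+s²)}`. -/
noncomputable def Efun (l : ℂ) (s y : ℝ) : ℂ :=
  Complex.exp (-(y:ℂ) * s) - Complex.exp (-(y:ℂ) * csqrt (l + (s:ℂ)^2))

lemma abs_csqrt (z : ℂ) (hz : z ≠ 0) : ‖csqrt z‖ = Real.sqrt (‖z‖) := by
  rw [csqrt, Complex.norm_cpow_of_ne_zero hz]
  simp [Real.rpow_natCast, Real.sqrt_eq_rpow]

lemma re_csqrt (z : ℂ) (hz : z ≠ 0) :
    (csqrt z).re = Real.sqrt ((‖z‖ + z.re) / 2) := by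
  rw [csqrt, Complex.cpow_def_of_ne_zero hz, Complex.exp_re]
  have h1 : (Complex.log z * (1/2 : ℂ)).re = Real.log (‖z‖) / 2 := by
    simp [Complex.log_re]; ring
  have h2 : (Complex.log z * (1/2 : ℂ)).im = z.arg / 2 := by
    simp [Complex.log_im]; ring
  rw [h1, h2, Real.cos_half (Complex.neg_pi_lt_arg z).le (Complex.arg_le_pi z),
    Complex.cos_arg hz]
  have habs : (0:ℝ) < ‖z‖ := norm_pos_iff.mpr hz
  have hexp : Real.exp (Real.log (‖z‖) / 2) = Real.sqrt (‖z‖) := by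
    rw [Real.sqrt_eq_rpow, Real.rpow_def_of_pos habs]; ring_nf
  rw [hexp, ← Real.sqrt_mul habs.le]
  congr 1
  field_simp

lemma sq_csqrt (z : ℂ) : (csqrt z)^2 = z := by
  have := Complex.cpow_nat_inv_pow z (n := 2) (by norm_num)
  simpa [csqrt, show ((2:ℕ):ℂ)⁻¹ = (1/2 : ℂ) by norm_num] using this

lemma sector_sum {κ a b t : ℝ} (hκ1 : -1 < κ) (hκ2 : κ < 1) (ht : 0 ≤ t)
    (hre : κ * Real.sqrt (a^2+b^2) ≤ a) :
    (1+κ)/4 * (Real.sqrt (a^2+b^2) + t) ≤ Real.sqrt ((a+t)^2+b^2) + (a+t) := by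
  set r := Real.sqrt (a^2+b^2) with hr
  set R := Real.sqrt ((a+t)^2+b^2) with hR
  have hr0 : 0 ≤ r := Real.sqrt_nonneg _
  have hR0 : 0 ≤ R := Real.sqrt_nonneg _
  have hrsq : r^2 = a^2+b^2 := Real.sq_sqrt (by positivity)
  have hRsq : R^2 = (a+t)^2+b^2 := Real.sq_sqrt (by positivity)
  have hra : -r ≤ a := by nlinarith [sq_nonneg (r + a), sq_nonneg b]
  have hra' : a ≤ r := by nlinarith [sq_nonneg (r - a), sq_nonneg b]
  have hRa : -(a+t) ≤ R := by nlinarith [sq_nonneg (R + (a+t)), sq_nonneg b]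
  have hRa' : (a+t) ≤ R := by nlinarith [sq_nonneg (R - (a+t)), sq_nonneg b]
  have h1 : r ≤ R + t := by nlinarith [sq_nonneg (R+t-r)]
  have hS1 : (1+κ) * r ≤ R + a + t := by nlinarith
  rcases le_or_gt (a + t) 0 with h | h
  · have : t ≤ r := by linarith
    nlinarith
  · have hS2 : 2*t - 2*r ≤ R + a + t := by nlinarith
    nlinarith [mul_nonneg (le_of_lt (by linarith : (0:ℝ) < 1+κ)) hR0]

lemma exp_diff_bound (a b : ℂ) (m : ℝ) (hma : m ≤ a.re) (hmb : m ≤ b.re) :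
    ‖Complex.exp (-a) - Complex.exp (-b)‖ ≤ ‖b - a‖ * Real.exp (-m) := by
  set g : ℝ → ℂ := fun t => Complex.exp (-(a + (t:ℂ) * (b - a))) with hg
  have hderiv : ∀ t : ℝ, HasDerivAt g (-(b-a) * Complex.exp (-(a + (t:ℂ) * (b - a)))) t := by
    intro t
    have hts : HasDerivAt (fun u : ℝ => (u:ℂ)) 1 t := by
      simpa using (hasDerivAt_id t).ofReal_comp
    have hlin : HasDerivAt (fun u : ℝ => -(a + (u:ℂ) * (b - a))) (-(b-a)) t := by
      have := ((hts.mul_const (b-a)).const_add a).neg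
      exact this.congr_deriv (by ring)
    have h := (Complex.hasDerivAt_exp (-(a + (t:ℂ) * (b - a)))).scomp (x := t) hlin
    have he : (fun u : ℝ => Complex.exp (-(a + (u:ℂ) * (b - a)))) = Complex.exp ∘ (fun u : ℝ => -(a + (u:ℂ) * (b - a))) := rfl
    rw [hg, he]
    exact h
  have hbound : ∀ t ∈ Set.Icc (0:ℝ) 1, ‖-(b-a) * Complex.exp (-(a + (t:ℂ) * (b - a)))‖ ≤ ‖b-a‖ * Real.exp (-m) := by
    intro t ht
    rw [norm_mul, norm_neg, Complex.norm_exp]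
    apply mul_le_mul_of_nonneg_left _ (norm_nonneg _)
    apply Real.exp_le_exp.2
    have : (-(a + (t:ℂ) * (b - a))).re = -((1-t) * a.re + t * b.re) := by
      simp [Complex.add_re, Complex.mul_re]
      ring
    rw [this]
    have h1 : m ≤ (1-t)*a.re + t*b.re := by
      have h2 : m = (1-t)*m + t*m := by ring
      rw [h2]
      gcongr
      · linarith [ht.2]
      · exact ht.1
    linarith
  have key := Convex.norm_image_sub_le_of_norm_hasDerivWithin_le
    (fun t ht => (hderiv t).hasDerivWithinAt) hbound (convex_Icc (0:ℝ) 1)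
    (Set.left_mem_Icc.2 zero_le_one) (Set.right_mem_Icc.2 zero_le_one)
  have hg0 : g 0 = Complex.exp (-a) := by simp [hg]
  have hg1 : g 1 = Complex.exp (-b) := by simp [hg]; ring_nf
  calc ‖Complex.exp (-a) - Complex.exp (-b)‖ = ‖g 1 - g 0‖ := by
        rw [hg0, hg1, ← norm_neg]; ring_nf
    _ ≤ ‖b-a‖ * Real.exp (-m) * ‖(1:ℝ) - 0‖ := key
    _ = ‖b-a‖ * Real.exp (-m) := by simp

lemma hasDerivAt_main (l : ℂ) (s y : ℝ)
    (hz : 0 < (l+(s:ℂ)^2).re ∨ (l+(s:ℂ)^2).im ≠ 0) :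
    HasDerivAt (fun t : ℝ => (t:ℂ) * Efun l t y)
      (Efun l s y + (s:ℂ) * (-(y:ℂ) * Complex.exp (-(y:ℂ)*s)
        + (y:ℂ) * ((s:ℂ) * (csqrt (l+(s:ℂ)^2))⁻¹) * Complex.exp (-(y:ℂ)*csqrt (l+(s:ℂ)^2)))) s := by
  set z := l + (s:ℂ)^2 with hzdef
  have hts : HasDerivAt (fun t : ℝ => (t:ℂ)) 1 s := by
    simpa using (hasDerivAt_id s).ofReal_comp
  have hsq : HasDerivAt (fun t : ℝ => l + (t:ℂ)^2) (2*(s:ℂ)) s := by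
    have h := (hts.mul hts).const_add l
    have : (1*(s:ℂ) + (s:ℂ)*1) = 2*(s:ℂ) := by ring
    rw [this] at h
    simpa [sq] using h
  have hcpow : HasDerivAt (fun w : ℂ => w ^ (1/2:ℂ)) ((1/2:ℂ) * z ^ (-(1/2):ℂ)) z := by
    have := (Complex.hasStrictDerivAt_cpow_const (c := (1/2:ℂ)) (Complex.mem_slitPlane_iff.2 hz)).hasDerivAt
    rw [show (-(1/2):ℂ) = 1/2 - 1 by norm_num]
    exact this
  have hw : HasDerivAt (fun t : ℝ => csqrt (l + (t:ℂ)^2)) ((s:ℂ) * (csqrt z)⁻¹) s := by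
    have := hcpow.scomp (x := s) hsq
    have h2 : (2*(s:ℂ)) • ((1/2:ℂ) * z ^ (-(1/2):ℂ)) = (s:ℂ) * (csqrt z)⁻¹ := by
      rw [smul_eq_mul, Complex.cpow_neg, csqrt]
      ring
    rw [h2] at this
    exact this
  have hexp1 : HasDerivAt (fun t : ℝ => Complex.exp (-(y:ℂ)*t)) (-(y:ℂ) * Complex.exp (-(y:ℂ)*s)) s := by
    have hlin : HasDerivAt (fun t : ℝ => -(y:ℂ)*(t:ℂ)) (-(y:ℂ)) s := by
      simpa using hts.const_mul (-(y:ℂ))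
    have := (Complex.hasDerivAt_exp (-(y:ℂ)*s)).scomp (x := s) hlin
    simpa [smul_eq_mul, mul_comm, Function.comp_def] using this
  have hexp2 : HasDerivAt (fun t : ℝ => Complex.exp (-(y:ℂ)*csqrt (l + (t:ℂ)^2)))
      (-(y:ℂ) * ((s:ℂ) * (csqrt z)⁻¹) * Complex.exp (-(y:ℂ)*csqrt z)) s := by
    have hlin : HasDerivAt (fun t : ℝ => -(y:ℂ)*csqrt (l + (t:ℂ)^2))
        (-(y:ℂ) * ((s:ℂ) * (csqrt z)⁻¹)) s := hw.const_mul (-(y:ℂ))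
    have := (Complex.hasDerivAt_exp (-(y:ℂ)*csqrt z)).scomp (x := s) hlin
    simpa [smul_eq_mul, mul_comm, Function.comp_def] using this
  have hE : HasDerivAt (fun t : ℝ => Efun l t y)
      (-(y:ℂ) * Complex.exp (-(y:ℂ)*s) + (y:ℂ) * ((s:ℂ) * (csqrt z)⁻¹) * Complex.exp (-(y:ℂ)*csqrt z)) s := by
    have := hexp1.sub hexp2
    exact this.congr_deriv (by ring)
  have := hts.mul hE
  exact this.congr_deriv (by simp only [Efun]; ring)

lemma texp_le {a t : ℝ} (ha : 0 < a) (ht : 0 ≤ t) : t * Real.exp (-(a*t)) ≤ 1/a := by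
  have h : a*t ≤ Real.exp (a*t) := by linarith [Real.add_one_le_exp (a*t)]
  calc t * Real.exp (-(a*t)) = (a*t) * Real.exp (-(a*t)) / a := by field_simp
    _ ≤ Real.exp (a*t) * Real.exp (-(a*t)) / a := by gcongr
    _ = 1/a := by rw [← Real.exp_add]; simp

lemma t2exp_le {a t : ℝ} (ha : 0 < a) (ht : 0 ≤ t) : t^2 * Real.exp (-(a*t)) ≤ 4/a^2 := by
  have h2 : (a*t/2)^2 ≤ Real.exp (a*t) := by
    have h := Real.add_one_le_exp (a*t/2)
    calc (a*t/2)^2 ≤ (a*t/2+1)^2 := by nlinarith [mul_nonneg ha.le ht]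
      _ ≤ Real.exp (a*t/2)^2 := by apply pow_le_pow_left₀ (by positivity) h
      _ = Real.exp (a*t) := by rw [← Real.exp_nat_mul]; ring_nf
  calc t^2 * Real.exp (-(a*t)) = (a*t/2)^2 * Real.exp (-(a*t)) * (4/a^2) := by
        field_simp; ring
    _ ≤ Real.exp (a*t) * Real.exp (-(a*t)) * (4/a^2) := by gcongr
    _ = 4/a^2 := by rw [← Real.exp_add]; simp

lemma poly_exp_le {a t : ℝ} (ha : 0 < a) (ht : 0 ≤ t) :
    (1+t) * t * Real.exp (-(2*a*t)) ≤ (1/a + 4/a^2) * Real.exp (-(a*t)) := by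
  have h : Real.exp (-(2*a*t)) = Real.exp (-(a*t)) * Real.exp (-(a*t)) := by
    rw [← Real.exp_add]; ring_nf
  rw [h]
  have h1 := texp_le ha ht
  have h2 := t2exp_le ha ht
  have he : (0:ℝ) < Real.exp (-(a*t)) := Real.exp_pos _
  have he1 : Real.exp (-(a*t)) ≤ 1 := Real.exp_le_one_iff.2 (by nlinarith)
  nlinarith [mul_nonneg ht he.le, mul_nonneg (mul_nonneg ht ht) he.le,
    mul_le_mul_of_nonneg_right h1 he.le, mul_le_mul_of_nonneg_right h2 he.le]

set_option maxHeartbeats 1000000 in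
/-- `(1+y) s |d/ds (s E(s,y))| ≤ C √|λ| e^{-δ s y}`. -/
theorem stmt_14 (ε ω : ℝ) (hε : ε ∈ Set.Ioo 0 Real.pi) (hω : 0 < ω) :
    ∃ C δ : ℝ, 0 < C ∧ 0 < δ ∧
      ∀ l ∈ SigmaSector ε, ω ≤ ‖l‖ → ∀ s y : ℝ, 0 < s → 0 ≤ y →
        (1 + y) * s *
            ‖deriv (fun t : ℝ => (t:ℂ) * Efun l t y) s‖ ≤
          C * Real.sqrt (‖l‖) * Real.exp (-δ * s * y) := by
  obtain ⟨hε0, hεπ⟩ := hε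
  set κ := Real.cos (Real.pi - ε) with hκdef
  have hκl : -1 < κ := by
    rw [hκdef]
    have h := Real.cos_lt_cos_of_nonneg_of_le_pi (x := Real.pi - ε) (y := Real.pi)
      (by linarith) le_rfl (by linarith)
    rwa [Real.cos_pi] at h
  have hκu : κ < 1 := by
    rw [hκdef]
    have h := Real.cos_lt_cos_of_nonneg_of_le_pi (x := 0) (y := Real.pi - ε)
      le_rfl (by linarith) (by linarith)
    rwa [Real.cos_zero] at h
  set c₁ : ℝ := (1+κ)/4 with hc₁def
  have hc₁ : 0 < c₁ := by rw [hc₁def]; linarith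
  have hc₁' : c₁ ≤ 1/2 := by rw [hc₁def]; linarith
  set c : ℝ := Real.sqrt (c₁/2) / 2 with hcdef
  have hc : 0 < c := by
    rw [hcdef]; positivity
  have hc1 : c ≤ 1 := by
    rw [hcdef]
    have : Real.sqrt (c₁/2) ≤ 1 := by
      rw [show (1:ℝ) = Real.sqrt 1 by simp]
      exact Real.sqrt_le_sqrt (by linarith)
    linarith
  have hcsq : (2*c)^2 = c₁/2 := by
    rw [hcdef]
    rw [show (2 * (Real.sqrt (c₁/2) / 2))^2 = Real.sqrt (c₁/2)^2 by ring]
    exact Real.sq_sqrt (by positivity)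
  set δ : ℝ := c/2 with hδdef
  have hδ : 0 < δ := by rw [hδdef]; linarith
  set K : ℝ := 1/δ + 4/δ^2 with hKdef
  have hK : 0 < K := by rw [hKdef]; positivity
  set rω : ℝ := Real.sqrt ω with hrωdef
  have hrω : 0 < rω := Real.sqrt_pos.2 hω
  set CB : ℝ := (1/(2*c^3)) * (1 + 1/(c*rω)) with hCBdef
  set CA : ℝ := (1+1/rω)*K/(2*c) + 2*(1+rω)*K/rω with hCAdef
  have hCB : 0 < CB := by rw [hCBdef]; positivity
  have hCA : 0 < CA := by rw [hCAdef]; positivity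
  refine ⟨CA + CB, δ, by positivity, hδ, ?_⟩
  rintro l ⟨hl0, harg⟩ hωl s y hs hy
  set r : ℝ := ‖l‖ with hrdef
  have hr : 0 < r := lt_of_lt_of_le hω hωl
  set rl : ℝ := Real.sqrt r with hrldef
  have hrl : 0 < rl := Real.sqrt_pos.2 hr
  have hrlsq : rl * rl = r := Real.mul_self_sqrt hr.le
  have hrlω : rω ≤ rl := Real.sqrt_le_sqrt hωl
  -- sector bound on real part of l
  have hre_l : κ * r ≤ l.re := by
    have hcos := Complex.cos_arg hl0
    have hmono : κ ≤ Real.cos l.arg := by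
      rw [← Real.cos_abs]
      exact Real.cos_le_cos_of_nonneg_of_le_pi (abs_nonneg _) (by linarith) harg.le
    have : κ * r ≤ Real.cos l.arg * r := by
      apply mul_le_mul_of_nonneg_right hmono hr.le
    rw [hcos] at this
    calc κ * r ≤ l.re / ‖l‖ * r := this
      _ = l.re := by rw [hrdef]; field_simp
  set z : ℂ := l + (s:ℂ)^2 with hzdef
  have hz_re : z.re = l.re + s^2 := by
    rw [hzdef]; simp [Complex.add_re]; norm_cast
  have hz_im : z.im = l.im := by
    rw [hzdef]; simp [Complex.add_im]; norm_cast
  have habs_l : ‖l‖ = Real.sqrt (l.re^2 + l.im^2) := by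
    rw [Complex.norm_def, Complex.normSq_apply]; ring_nf
  have habs_z : ‖z‖ = Real.sqrt ((l.re + s^2)^2 + l.im^2) := by
    rw [Complex.norm_def, Complex.normSq_apply, hz_re, hz_im]; ring_nf
  -- key sector inequality
  have hkey : c₁ * (r + s^2) ≤ ‖z‖ + z.re := by
    have := sector_sum (a := l.re) (b := l.im) (t := s^2) hκl hκu (sq_nonneg s)
      (by rw [← habs_l, ← hrdef]; exact hre_l)
    rw [habs_z, hz_re]
    calc c₁ * (r + s^2) = (1+κ)/4 * (Real.sqrt (l.re^2+l.im^2) + s^2) := by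
          rw [hc₁def, ← habs_l, ← hrdef]
      _ ≤ Real.sqrt ((l.re + s^2)^2 + l.im^2) + (l.re + s^2) := this
  have hkey_pos : 0 < ‖z‖ + z.re := lt_of_lt_of_le (by positivity) hkey
  have hz0 : z ≠ 0 := by
    intro h
    rw [h] at hkey_pos
    simp at hkey_pos
  have hslit : 0 < z.re ∨ z.im ≠ 0 := by
    by_contra h
    push_neg at h
    obtain ⟨h1, h2⟩ := h
    have : ‖z‖ = |z.re| := by
      rw [Complex.norm_def, Complex.normSq_apply, h2]
      rw [show z.re * z.re + 0 * 0 = z.re^2 by ring, Real.sqrt_sq_eq_abs]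
    rw [this, abs_of_nonpos h1] at hkey_pos
    linarith
  set w : ℂ := csqrt z with hwdef
  have hw_re_eq : w.re = Real.sqrt ((‖z‖ + z.re)/2) := re_csqrt z hz0
  -- lower bounds for w.re
  have h2cs : 2*c*s ≤ w.re := by
    rw [hw_re_eq]
    have h1 : 2*c*s = Real.sqrt ((c₁/2) * s^2) := by
      rw [Real.sqrt_mul (by positivity), Real.sqrt_sq hs.le, ← hcsq,
        Real.sqrt_sq (by positivity)]
    rw [h1]
    apply Real.sqrt_le_sqrt
    have h3 : c₁ * s^2 ≤ c₁*(r+s^2) := mul_le_mul_of_nonneg_left (by linarith) hc₁.le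
    linarith
  have h2cr : 2*c*rl ≤ w.re := by
    rw [hw_re_eq]
    have h1 : 2*c*rl = Real.sqrt ((c₁/2) * r) := by
      rw [Real.sqrt_mul (by positivity), ← hcsq, Real.sqrt_sq (by positivity), hrldef]
    rw [h1]
    apply Real.sqrt_le_sqrt
    have h3 : c₁ * r ≤ c₁*(r+s^2) :=
      mul_le_mul_of_nonneg_left (le_add_of_nonneg_right (sq_nonneg s)) hc₁.le
    linarith
  have hw_pos : 0 < w.re := lt_of_lt_of_le (by positivity) h2cs
  have hw0 : w ≠ 0 := fun h => by rw [h] at hw_pos; simp at hw_pos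
  have hw_le_abs : w.re ≤ ‖w‖ := Complex.re_le_norm w
  have habs_w_pos : 0 < ‖w‖ := lt_of_lt_of_le hw_pos hw_le_abs
  -- |w + s| ≥ 2 c rl
  have hws_abs : 2*c*rl ≤ ‖w + (s:ℂ)‖ := by
    have h1 : (w + (s:ℂ)).re = w.re + s := by simp
    have := Complex.re_le_norm (w + (s:ℂ))
    rw [h1] at this
    linarith
  have hws_pos : 0 < ‖w + (s:ℂ)‖ := lt_of_lt_of_le (by positivity) hws_abs
  -- |w - s| ≤ rl/(2c)
  have hid : (w - (s:ℂ)) * (w + (s:ℂ)) = l := by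
    have h := sq_csqrt z
    rw [← hwdef] at h
    rw [hzdef] at h
    linear_combination h
  have habs_ws : ‖w - (s:ℂ)‖ ≤ rl/(2*c) := by
    have h1 : ‖w - (s:ℂ)‖ * ‖w + (s:ℂ)‖ = r := by
      rw [← norm_mul, hid, hrdef]
    have h2 : ‖w - (s:ℂ)‖ = r / ‖w + (s:ℂ)‖ := by
      field_simp at h1 ⊢
      linarith [h1]
    rw [h2]
    rw [div_le_div_iff₀ hws_pos (by positivity)]
    calc r * (2*c) = (2*c*rl) * rl := by rw [← hrlsq]; ring
      _ ≤ ‖w + (s:ℂ)‖ * rl := by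
          apply mul_le_mul_of_nonneg_right hws_abs hrl.le
      _ = rl * ‖w + (s:ℂ)‖ := by ring
  -- exponential absolute values
  have heyw : ‖Complex.exp (-(y:ℂ)*w)‖ = Real.exp (-(y*w.re)) := by
    rw [Complex.norm_exp]
    congr 1
    simp [Complex.mul_re]
  have heys : ‖Complex.exp (-(y:ℂ)*(s:ℂ))‖ = Real.exp (-(y*s)) := by
    rw [Complex.norm_exp]
    congr 1
    simp [Complex.mul_re]
  -- bounds on |E|
  set X : ℝ := ‖Efun l s y‖ with hXdef
  have hEfun : Efun l s y = Complex.exp (-((y:ℂ)*(s:ℂ))) - Complex.exp (-((y:ℂ)*w)) := by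
    rw [Efun, hwdef, hzdef]
    ring_nf
  have hyw_ge : c*(s*y) ≤ y * w.re := by
    calc c*(s*y) = y * (c*s) := by ring
      _ ≤ y * w.re := by
          apply mul_le_mul_of_nonneg_left _ hy
          have h3 : 0 ≤ c*s := mul_nonneg hc.le hs.le
          linarith
  have hys_ge : c*(s*y) ≤ y * s := by
    have h3 : 0 ≤ (1-c)*(s*y) := mul_nonneg (by linarith) (mul_nonneg hs.le hy)
    have h4 : (1-c)*(s*y) = y*s - c*(s*y) := by ring
    linarith
  have hE1 : X ≤ 2 * Real.exp (-(c*(s*y))) := by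
    rw [hXdef, hEfun]
    calc ‖Complex.exp (-((y:ℂ)*(s:ℂ))) - Complex.exp (-((y:ℂ)*w))‖
        ≤ ‖Complex.exp (-((y:ℂ)*(s:ℂ)))‖ + ‖Complex.exp (-((y:ℂ)*w))‖ := by
          apply norm_sub_le
      _ ≤ Real.exp (-(c*(s*y))) + Real.exp (-(c*(s*y))) := by
          rw [show -((y:ℂ)*(s:ℂ)) = -(y:ℂ)*(s:ℂ) by ring, show -((y:ℂ)*w) = -(y:ℂ)*w by ring,
            heys, heyw]
          exact add_le_add (Real.exp_le_exp.2 (by linarith)) (Real.exp_le_exp.2 (by linarith))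
      _ = 2 * Real.exp (-(c*(s*y))) := by ring
  have hE2 : X ≤ y * (rl/(2*c)) * Real.exp (-(c*(s*y))) := by
    rw [hXdef, hEfun]
    have hre_a : c*(s*y) ≤ ((y:ℂ)*(s:ℂ)).re := by
      simpa [Complex.mul_re] using hys_ge
    have hre_b : c*(s*y) ≤ ((y:ℂ)*w).re := by
      simpa [Complex.mul_re] using hyw_ge
    have := exp_diff_bound ((y:ℂ)*(s:ℂ)) ((y:ℂ)*w) (c*(s*y)) hre_a hre_b
    calc ‖Complex.exp (-((y:ℂ)*(s:ℂ))) - Complex.exp (-((y:ℂ)*w))‖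
        ≤ ‖(y:ℂ)*w - (y:ℂ)*(s:ℂ)‖ * Real.exp (-(c*(s*y))) := this
      _ = (y * ‖w - (s:ℂ)‖) * Real.exp (-(c*(s*y))) := by
          rw [show (y:ℂ)*w - (y:ℂ)*(s:ℂ) = (y:ℂ)*(w - (s:ℂ)) by ring, norm_mul]
          simp [Complex.norm_real, Real.norm_eq_abs, abs_of_nonneg hy]
      _ ≤ y * (rl/(2*c)) * Real.exp (-(c*(s*y))) := by
          gcongr
  -- derivative identity
  have hD := hasDerivAt_main l s y (by rw [← hzdef]; exact hslit)
  rw [hD.deriv]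
  set D : ℂ := Efun l s y + (s:ℂ) * (-(y:ℂ) * Complex.exp (-(y:ℂ)*(s:ℂ))
    + (y:ℂ) * ((s:ℂ) * w⁻¹) * Complex.exp (-(y:ℂ)*w)) with hDdef
  have hDid : D = (1 - ((s*y:ℝ):ℂ)) * Efun l s y
      + ((y*s:ℝ):ℂ) * (((s:ℂ) - w) * w⁻¹) * Complex.exp (-(y:ℂ)*w) := by
    rw [hDdef, hEfun]
    push_cast
    field_simp
    ring
  -- bound |D|
  have habsD : ‖D‖ ≤ (1 + s*y) * X
      + (y*s) * (‖w - (s:ℂ)‖ * (‖w‖)⁻¹) * Real.exp (-(y*w.re)) := by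
    rw [hDid]
    calc ‖(1 - ((s*y:ℝ):ℂ)) * Efun l s y
        + ((y*s:ℝ):ℂ) * (((s:ℂ) - w) * w⁻¹) * Complex.exp (-(y:ℂ)*w)‖
        ≤ ‖(1 - ((s*y:ℝ):ℂ)) * Efun l s y‖
          + ‖((y*s:ℝ):ℂ) * (((s:ℂ) - w) * w⁻¹) * Complex.exp (-(y:ℂ)*w)‖ := by
          apply norm_add_le
      _ ≤ (1 + s*y) * X + (y*s) * (‖w - (s:ℂ)‖ * (‖w‖)⁻¹) * Real.exp (-(y*w.re)) := by
          rw [norm_mul, norm_mul, norm_mul, norm_mul, norm_inv, heyw]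
          gcongr
          · rw [show (1 : ℂ) - ((s*y:ℝ):ℂ) = (((1 - s*y : ℝ)):ℂ) by push_cast; ring,
              Complex.norm_real, Real.norm_eq_abs]
            calc |1 - s*y| ≤ |(1:ℝ)| + |s*y| := abs_sub _ _
              _ = 1 + s*y := by rw [abs_one, abs_of_nonneg (by positivity)]
          · rw [Complex.norm_real, Real.norm_eq_abs, abs_of_nonneg (by positivity)]
          · rw [show (s:ℂ) - w = -(w - (s:ℂ)) by ring, norm_neg]
  -- final assembly
  set e1 : ℝ := Real.exp (-(c*(s*y))) with he1def
  set e2 : ℝ := Real.exp (-(c*rω*y)) with he2def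
  set U : ℝ := Real.exp (-(δ*(s*y))) with hUdef
  have hU : 0 < U := Real.exp_pos _
  have he1pos : 0 < e1 := Real.exp_pos _
  have he2pos : 0 < e2 := Real.exp_pos _
  have hX0 : 0 ≤ X := norm_nonneg _
  have hgoal_exp : Real.exp (-δ * s * y) = U := by
    rw [hUdef]; congr 1; ring
  rw [hgoal_exp]
  have hc2δ : c = 2*δ := by rw [hδdef]; ring
  have he1U : e1 = U * U := by
    rw [he1def, hUdef, ← Real.exp_add]; congr 1; rw [hc2δ]; ring
  -- s*y * e1 ≤ (2/c) * U
  have h_se1 : (s*y)*e1 ≤ (2/c)*U := by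
    rw [he1U]
    have := texp_le hδ (mul_nonneg hs.le hy) (t := s*y)
    calc (s*y)*(U*U) = ((s*y)*Real.exp (-(δ*(s*y))))*U := by rw [hUdef]; ring
      _ ≤ (1/δ)*U := mul_le_mul_of_nonneg_right this hU.le
      _ = (2/c)*U := by rw [hc2δ]; congr 1; field_simp
  have h_ye2 : y*e2 ≤ 1/(c*rω) := by
    rw [he2def]
    have := texp_le (a := c*rω) (t := y) (by positivity) hy
    calc y * Real.exp (-(c*rω*y)) = y * Real.exp (-((c*rω)*y)) := by ring_nf
      _ ≤ 1/(c*rω) := this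
  have h_e2le1 : e2 ≤ 1 := by
    rw [he2def]
    apply Real.exp_le_one_iff.2
    have : 0 ≤ c*rω*y := by positivity
    linarith
  -- poly bound
  have hpoly : (1+(s*y))*(s*y)*e1 ≤ K*U := by
    rw [he1def, hUdef, hKdef]
    have h := poly_exp_le (a := δ) (t := s*y) hδ (mul_nonneg hs.le hy)
    calc (1+(s*y))*(s*y)*Real.exp (-(c*(s*y)))
        = (1+(s*y))*(s*y)*Real.exp (-(2*δ*(s*y))) := by rw [hc2δ]
      _ ≤ (1/δ + 4/δ^2) * Real.exp (-(δ*(s*y))) := h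
  -- Term B bound
  have hwre_sum : c*s + c*rω ≤ w.re := by
    have h5 : c*rω ≤ c*rl := mul_le_mul_of_nonneg_left hrlω hc.le
    linarith
  have hexpw : Real.exp (-(y*w.re)) ≤ e1 * e2 := by
    rw [he1def, he2def, ← Real.exp_add]
    apply Real.exp_le_exp.2
    have h6 : y*(c*s + c*rω) ≤ y*w.re := mul_le_mul_of_nonneg_left hwre_sum hy
    have h7 : y*(c*s + c*rω) = c*(s*y) + c*rω*y := by ring
    linarith
  have hinvw : (‖w‖)⁻¹ ≤ 1/(2*c*s) := by
    rw [one_div]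
    apply inv_anti₀ (by positivity)
    linarith
  have hB : (1+y)*s*((y*s) * (‖w - (s:ℂ)‖ * (‖w‖)⁻¹) * Real.exp (-(y*w.re)))
      ≤ CB * rl * U := by
    have step1 : (1+y)*s*((y*s) * (‖w - (s:ℂ)‖ * (‖w‖)⁻¹) * Real.exp (-(y*w.re)))
        ≤ (1+y)*s*((y*s) * ((rl/(2*c)) * (1/(2*c*s))) * (e1*e2)) := by
      gcongr
    have step2 : (1+y)*s*((y*s) * ((rl/(2*c)) * (1/(2*c*s))) * (e1*e2))
        = (rl/(4*c^2)) * ((1+y)*(y*s)*(e1*e2)) := by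
      field_simp
      ring
    have step3 : (1+y)*(y*s)*(e1*e2) ≤ (2/c)*(1+1/(c*rω))*U := by
      have t1 : ((s*y)*e1)*e2 ≤ ((2/c)*U)*1 :=
        mul_le_mul h_se1 h_e2le1 he2pos.le (by positivity)
      have t2 : ((s*y)*e1)*(y*e2) ≤ ((2/c)*U)*(1/(c*rω)) :=
        mul_le_mul h_se1 h_ye2 (by positivity) (by positivity)
      calc (1+y)*(y*s)*(e1*e2) = ((s*y)*e1)*e2 + ((s*y)*e1)*(y*e2) := by ring
        _ ≤ ((2/c)*U)*1 + ((2/c)*U)*(1/(c*rω)) := add_le_add t1 t2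
        _ = (2/c)*(1+1/(c*rω))*U := by ring
    calc (1+y)*s*((y*s) * (‖w - (s:ℂ)‖ * (‖w‖)⁻¹) * Real.exp (-(y*w.re)))
        ≤ (rl/(4*c^2)) * ((1+y)*(y*s)*(e1*e2)) := by rw [← step2]; exact step1
      _ ≤ (rl/(4*c^2)) * ((2/c)*(1+1/(c*rω))*U) := by
          apply mul_le_mul_of_nonneg_left step3 (by positivity)
      _ = CB * rl * U := by rw [hCBdef]; field_simp; ring
  -- Term A bound
  have hA : (1+y)*s*((1+s*y)*X) ≤ CA * rl * U := by
    rcases le_total (y*rω) 1 with hcase | hcase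
    · have hy' : y ≤ 1/rω := by
        rw [le_div_iff₀ hrω]; linarith
      have step1 : (1+y)*s*((1+s*y)*X) ≤ (1+1/rω)*(s*((1+s*y)*X)) := by
        have : (1+y)*(s*((1+s*y)*X)) ≤ (1+1/rω)*(s*((1+s*y)*X)) := by
          apply mul_le_mul_of_nonneg_right (by linarith) (by positivity)
        calc (1+y)*s*((1+s*y)*X) = (1+y)*(s*((1+s*y)*X)) := by ring
          _ ≤ (1+1/rω)*(s*((1+s*y)*X)) := this
      have step2 : s*((1+s*y)*X) ≤ (1+(s*y))*(s*y)*e1*(rl/(2*c)) := by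
        have h7 : s*((1+s*y)*X) ≤ s*((1+s*y)*(y * (rl/(2*c)) * e1)) := by
          gcongr
        calc s*((1+s*y)*X) ≤ s*((1+s*y)*(y * (rl/(2*c)) * e1)) := h7
          _ = (1+(s*y))*(s*y)*e1*(rl/(2*c)) := by ring
      have step3 : (1+(s*y))*(s*y)*e1*(rl/(2*c)) ≤ (K*U)*(rl/(2*c)) :=
        mul_le_mul_of_nonneg_right hpoly (by positivity)
      calc (1+y)*s*((1+s*y)*X) ≤ (1+1/rω)*(s*((1+s*y)*X)) := step1
        _ ≤ (1+1/rω)*((K*U)*(rl/(2*c))) := by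
            apply mul_le_mul_of_nonneg_left (le_trans step2 step3) (by positivity)
        _ = ((1+1/rω)*K/(2*c)) * rl * U := by ring
        _ ≤ CA * rl * U := by
            rw [hCAdef]
            apply mul_le_mul_of_nonneg_right _ hU.le
            apply mul_le_mul_of_nonneg_right _ hrl.le
            have : 0 ≤ 2*(1+rω)*K/rω := by positivity
            linarith
    · have hy1 : 1 + y ≤ y*(1+rω) := by
        have h8 : y*(1+rω) = y + y*rω := by ring
        linarith
      have step1 : (1+y)*s*((1+s*y)*X) ≤ (y*(1+rω))*s*((1+s*y)*X) := by
        apply mul_le_mul_of_nonneg_right _ (by positivity)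
        apply mul_le_mul_of_nonneg_right hy1 hs.le
      have step2 : (y*(1+rω))*s*((1+s*y)*X) ≤ (y*(1+rω))*s*((1+s*y)*(2*e1)) := by
        gcongr
      have step3 : (y*(1+rω))*s*((1+s*y)*(2*e1)) = 2*(1+rω)*((1+(s*y))*(s*y)*e1) := by ring
      calc (1+y)*s*((1+s*y)*X) ≤ (y*(1+rω))*s*((1+s*y)*(2*e1)) := le_trans step1 step2
        _ = 2*(1+rω)*((1+(s*y))*(s*y)*e1) := step3
        _ ≤ 2*(1+rω)*(K*U) := by
            apply mul_le_mul_of_nonneg_left hpoly (by positivity)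
        _ = (2*(1+rω)*K/rω)*rω*U := by field_simp
        _ ≤ (2*(1+rω)*K/rω)*rl*U := by
            apply mul_le_mul_of_nonneg_right _ hU.le
            apply mul_le_mul_of_nonneg_left hrlω (by positivity)
        _ ≤ CA * rl * U := by
            rw [hCAdef]
            apply mul_le_mul_of_nonneg_right _ hU.le
            apply mul_le_mul_of_nonneg_right _ hrl.le
            have : 0 ≤ (1+1/rω)*K/(2*c) := by positivity
            linarith
  -- combine
  calc (1+y)*s*‖D‖
      ≤ (1+y)*s*((1 + s*y) * X
        + (y*s) * (‖w - (s:ℂ)‖ * (‖w‖)⁻¹) * Real.exp (-(y*w.re))) := by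
        apply mul_le_mul_of_nonneg_left habsD (by positivity)
    _ = (1+y)*s*((1+s*y)*X)
        + (1+y)*s*((y*s) * (‖w - (s:ℂ)‖ * (‖w‖)⁻¹) * Real.exp (-(y*w.re))) := by
        ring
    _ ≤ CA * rl * U + CB * rl * U := add_le_add hA hB
    _ = (CA + CB) * rl * U := by ring
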